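/- Let I ⊆ ℝ be an open interval, p, S, L : I → Matₙ(ℝ) with S differentiable, L twice differentiable, S(u) symmetric for all u, S'(u) + S(u)² + p(u) = 0 and L'(u) = S(u)·L(u) on I, and L(u) invertible for all u ∈ I. Set g(u) := L(u)ᵀ·L(u). Then for every u ∈ I, (1/2)·g''(u) − (1/4)·g'(u)·g(u)⁻¹·g'(u) = −L(u)ᵀ·p(u)·L(u). -/

import Mathlib

open Matrix Set

attribute [local instance] Matrix.frobeniusNormedAddCommGroup Matrix.frobeniusNormedSpace

attribute [local instance] Matrix.frobeniusNormedRing Matrix.frobeniusNormedAlgebra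

/-- Auxiliary: the transpose of a matrix-valued function is differentiable, with
derivative the transpose of the derivative. -/
lemma hasDerivAt_transpose_aux {n : ℕ} {f : ℝ → Matrix (Fin n) (Fin n) ℝ}
    {f' : Matrix (Fin n) (Fin n) ℝ} {u : ℝ} (hf : HasDerivAt f f' u) :
    HasDerivAt (fun w => (f w)ᵀ) f'ᵀ u := by
  let T : Matrix (Fin n) (Fin n) ℝ →L[ℝ] Matrix (Fin n) (Fin n) ℝ :=
    LinearMap.toContinuousLinearMap (Matrix.transposeLinearEquiv (Fin n) (Fin n) ℝ ℝ).toLinearMap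
  exact T.hasFDerivAt.comp_hasDerivAt u hf

/-- If `S` is symmetric, satisfies the Sachs equation `S' + S² + p = 0`,
`L' = S L`, and `L u` is invertible on the open interval `(a,b)`, then with `g = Lᵀ L`,
`(1/2) g'' − (1/4) g' g⁻¹ g' = −Lᵀ p L` on `(a,b)`. -/
theorem rosen_tidal_curvature {n : ℕ} (a b : ℝ)
    (p S L : ℝ → Matrix (Fin n) (Fin n) ℝ)
    (hSsym : ∀ u ∈ Set.Ioo a b, (S u)ᵀ = S u)
    (hSachs : ∀ u ∈ Set.Ioo a b, HasDerivAt S (-(S u * S u + p u)) u)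
    (hL : ∀ u ∈ Set.Ioo a b, HasDerivAt L (S u * L u) u)
    (hLinv : ∀ u ∈ Set.Ioo a b, IsUnit (L u)) :
    ∀ u ∈ Set.Ioo a b,
      (1/2 : ℝ) • deriv (deriv (fun w => (L w)ᵀ * L w)) u -
      (1/4 : ℝ) • (deriv (fun w => (L w)ᵀ * L w) u * ((L u)ᵀ * L u)⁻¹ *
        deriv (fun w => (L w)ᵀ * L w) u)
      = -((L u)ᵀ * p u * L u) := by
  intro u hu
  set D : ℝ → Matrix (Fin n) (Fin n) ℝ := fun v => (2:ℝ) • ((L v)ᵀ * S v * L v) with hD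
  have hg1 : ∀ v ∈ Set.Ioo a b, HasDerivAt (fun w => (L w)ᵀ * L w) (D v) v := by
    intro v hv
    have h1 : HasDerivAt (fun w => (L w)ᵀ * L w) ((S v * L v)ᵀ * L v + (L v)ᵀ * (S v * L v)) v :=
      (hasDerivAt_transpose_aux (hL v hv)).mul (hL v hv)
    convert h1 using 1
    simp only [hD, Matrix.transpose_mul, hSsym v hv, two_smul, Matrix.mul_assoc]
  have hmem : Set.Ioo a b ∈ nhds u := isOpen_Ioo.mem_nhds hu
  have hEv : deriv (fun w => (L w)ᵀ * L w) =ᶠ[nhds u] D :=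
    Filter.eventuallyEq_of_mem hmem (fun v hv => (hg1 v hv).deriv)
  -- the derivative of `Lᵀ S` equals `-Lᵀ p` by the Sachs equation
  have hTS : HasDerivAt (fun w => (L w)ᵀ * S w) (-((L u)ᵀ * p u)) u := by
    have h : HasDerivAt (fun w => (L w)ᵀ * S w) ((S u * L u)ᵀ * S u + (L u)ᵀ * -(S u * S u + p u)) u :=
      (hasDerivAt_transpose_aux (hL u hu)).mul (hSachs u hu)
    convert h using 1
    simp only [Matrix.transpose_mul, hSsym u hu, Matrix.mul_add, Matrix.mul_neg,
      Matrix.mul_assoc, neg_add]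
    abel
  have hD' : HasDerivAt D ((2:ℝ) • ((L u)ᵀ * (S u * (S u * L u)) - (L u)ᵀ * p u * L u)) u := by
    have h : HasDerivAt D ((2:ℝ) • (-((L u)ᵀ * p u) * L u + (L u)ᵀ * S u * (S u * L u))) u :=
      (hTS.mul (hL u hu)).const_smul (2:ℝ)
    convert h using 1
    simp only [Matrix.mul_assoc, neg_mul, sub_eq_neg_add]
    try rw [add_comm]
  have hdg : deriv (fun w => (L w)ᵀ * L w) u = D u := (hg1 u hu).deriv
  have hddg : deriv (deriv (fun w => (L w)ᵀ * L w)) u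
      = (2:ℝ) • ((L u)ᵀ * (S u * (S u * L u)) - (L u)ᵀ * p u * L u) := by
    exact hEv.deriv_eq.trans hD'.deriv
  rw [hdg, hddg]
  -- inverse manipulations
  have hdetL : IsUnit (L u).det := (Matrix.isUnit_iff_isUnit_det _).mp (hLinv u hu)
  have hdetLT : IsUnit (L u)ᵀ.det := by rwa [Matrix.det_transpose]
  have hinv : ((L u)ᵀ * L u)⁻¹ = (L u)⁻¹ * ((L u)ᵀ)⁻¹ := Matrix.mul_inv_rev _ _
  rw [hinv, hD]
  simp only [smul_mul_assoc, Matrix.mul_smul, smul_smul]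
  rw [show (L u)ᵀ * S u * L u * ((L u)⁻¹ * ((L u)ᵀ)⁻¹) * ((L u)ᵀ * S u * L u)
      = (L u)ᵀ * S u * (L u * (L u)⁻¹) * (((L u)ᵀ)⁻¹ * (L u)ᵀ) * (S u * L u) by
    simp only [Matrix.mul_assoc]]
  rw [Matrix.mul_nonsing_inv _ hdetL, Matrix.nonsing_inv_mul _ hdetLT]
  simp only [Matrix.mul_one, smul_sub, smul_smul]
  norm_num
  simp only [Matrix.mul_assoc]
  abel
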